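/- Let c, d ∈ (0,1) with c ≤ p_i ≤ d for each i = 1,…,N, and let t_i = T for each i and some T > 0. Let 1 ≤ k, 1 ≤ n with k+n ≤ N, and suppose p_k ≥ p_{k+n}. Then EXC = q_1 + q_2 + q_3 satisfies EXC ≤ T · d · ((p_k − p_{k+n})/(1 − p_k)) · ((1−c)^k/c^2) · (A − B·(1−c)^{n−1}), where A = 1 + k·c·( 1 − ((1 − p_k)/(1−c)) · (c/d) · ((1−d)/(1−c))^{k−1} ) and B = 1 − c + c·(n+k)·(1 − c/d). -/

import Mathlib

open Finset

/-- `q_1 = T_{k−1}·Q_{k−1}·(p_{k+n} − p_k) + Q_{k−1}·(t_{k+n}·p_{k+n} − t_k·p_k)`. -/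
noncomputable def q1 (p t : ℕ → ℝ) (k n : ℕ) : ℝ :=
  (∑ i ∈ Finset.Icc 1 (k - 1), t i) * (∏ i ∈ Finset.Icc 1 (k - 1), (1 - p i)) *
      (p (k + n) - p k) +
    (∏ i ∈ Finset.Icc 1 (k - 1), (1 - p i)) * (t (k + n) * p (k + n) - t k * p k)

/-- `q_2 = Σ_{l=k+1}^{k+n−1} Q_{l−1}·p_l·(T_l·(p_k − p_{k+n})/(1 − p_k)
      + (t_{k+n} − t_k)·(1 − p_{k+n})/(1 − p_k))`. -/
noncomputable def q2 (p t : ℕ → ℝ) (k n : ℕ) : ℝ :=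
  ∑ l ∈ Finset.Icc (k + 1) (k + n - 1),
    (∏ i ∈ Finset.Icc 1 (l - 1), (1 - p i)) * p l *
      ((∑ i ∈ Finset.Icc 1 l, t i) * (p k - p (k + n)) / (1 - p k) +
        (t (k + n) - t k) * (1 - p (k + n)) / (1 - p k))

/-- `q_3 = T_{k+n}·Q_{k+n−1}·(p_k − p_{k+n})/(1 − p_k)`. -/
noncomputable def q3 (p t : ℕ → ℝ) (k n : ℕ) : ℝ :=
  (∑ i ∈ Finset.Icc 1 (k + n), t i) * (∏ i ∈ Finset.Icc 1 (k + n - 1), (1 - p i)) *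
    (p k - p (k + n)) / (1 - p k)


/-- If `c ≤ p_i ≤ d` with `c, d ∈ (0,1)`, all execution times are equal to `T > 0`, and
`p_k ≥ p_{k+n}`, then the excess expected solving time `EXC = q_1 + q_2 + q_3` caused by
interchanging the `k`-th and `(k+n)`-th candidates satisfies
`EXC ≤ T·d·((p_k − p_{k+n})/(1 − p_k))·((1−c)^k/c²)·(A − B·(1−c)^{n−1})`, where
`A = 1 + k·c·(1 − ((1 − p_k)/(1−c))·(c/d)·((1−d)/(1−c))^{k−1})` and
`B = 1 − c + c·(n+k)·(1 − c/d)`. -/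
lemma geom_id (c d : ℝ) (hc : c ≠ 0) (k : ℕ) :
    ∀ n : ℕ, 1 ≤ n →
      d * (∑ l ∈ Finset.Icc (k+1) (k+n-1), (l:ℝ) * (1-c)^(l-1))
          + ((k:ℝ) + (n:ℝ)) * (1-c)^(k+n-1)
        = d * (1-c)^k * (1 + (k:ℝ)*c)/c^2
          - (1-c)^(k+n-1) * (d/c^2 - d/c + ((n:ℝ)+(k:ℝ))*(d/c - 1)) := by
  intro n hn
  induction n, hn using Nat.le_induction with
  | base =>
      rw [show k + 1 - 1 = k from by omega]
      rw [Finset.Icc_eq_empty (by omega : ¬ k+1 ≤ k)]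
      simp only [Finset.sum_empty, Nat.cast_one]
      field_simp
      ring
  | succ n hn ih =>
      obtain ⟨j, rfl⟩ : ∃ j, n = j + 1 := ⟨n - 1, by omega⟩
      simp only [show k + (j+1) - 1 = k + j from by omega] at ih
      rw [show k + (j+1+1) - 1 = (k+j)+1 from by omega]
      rw [Finset.sum_Icc_succ_top (by omega : k+1 ≤ (k+j)+1)]
      simp only [Nat.add_sub_cancel]
      push_cast at ih ⊢
      field_simp at ih ⊢
      linear_combination ih

theorem excess_upper_bound_equal_times
    (N : ℕ) (hN : 1 ≤ N) (p t : ℕ → ℝ) (c d T : ℝ)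
    (hc : c ∈ Set.Ioo (0 : ℝ) 1) (hd : d ∈ Set.Ioo (0 : ℝ) 1)
    (hp : ∀ i ∈ Finset.Icc 1 N, c ≤ p i ∧ p i ≤ d)
    (hT : 0 < T) (ht : ∀ i ∈ Finset.Icc 1 N, t i = T)
    (k n : ℕ) (hk : 1 ≤ k) (hn : 1 ≤ n) (hkn : k + n ≤ N)
    (hpk : p (k + n) ≤ p k) :
    q1 p t k n + q2 p t k n + q3 p t k n ≤
      T * d * ((p k - p (k + n)) / (1 - p k)) * ((1 - c) ^ k / c ^ 2) *
        ((1 + (k : ℝ) * c *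
            (1 - ((1 - p k) / (1 - c)) * (c / d) * ((1 - d) / (1 - c)) ^ (k - 1))) -
          (1 - c + c * ((n : ℝ) + (k : ℝ)) * (1 - c / d)) * (1 - c) ^ (n - 1)) := by
  obtain ⟨hc0, hc1⟩ := hc
  obtain ⟨hd0, hd1⟩ := hd
  have hx0 : (0:ℝ) < 1 - c := by linarith
  have hpc : ∀ i ∈ Finset.Icc 1 (k+n), c ≤ p i ∧ p i ≤ d := fun i hi => by
    have := Finset.mem_Icc.mp hi
    exact hp i (Finset.mem_Icc.mpr ⟨this.1, by omega⟩)
  have hpkd : p k ≤ d := (hpc k (Finset.mem_Icc.mpr ⟨hk, by omega⟩)).2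
  have h1pk : (0:ℝ) < 1 - p k := by linarith
  have h1pk' : (1:ℝ) - p k ≠ 0 := ne_of_gt h1pk
  -- sums of times
  have hts : ∀ m, m ≤ N → (∑ i ∈ Finset.Icc 1 m, t i) = (m:ℝ) * T := by
    intro m hm
    rw [Finset.sum_congr rfl (fun i hi => by
      have := Finset.mem_Icc.mp hi
      exact ht i (Finset.mem_Icc.mpr ⟨this.1, by omega⟩))]
    simp [Nat.card_Icc, mul_comm]
  -- bounds on products
  have hQle : ∀ m : ℕ, m ≤ k + n → (∏ i ∈ Finset.Icc 1 m, (1 - p i)) ≤ (1-c)^m := by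
    intro m hm
    calc (∏ i ∈ Finset.Icc 1 m, (1 - p i)) ≤ ∏ i ∈ Finset.Icc 1 m, (1-c) := by
          apply Finset.prod_le_prod
          · intro i hi
            have h := hpc i (by
              have := Finset.mem_Icc.mp hi
              exact Finset.mem_Icc.mpr ⟨this.1, by omega⟩)
            linarith [h.2]
          · intro i hi
            have h := hpc i (by
              have := Finset.mem_Icc.mp hi
              exact Finset.mem_Icc.mpr ⟨this.1, by omega⟩)
            linarith [h.1]
      _ = (1-c)^m := by simp [Nat.card_Icc]
  have hQge : ∀ m : ℕ, m ≤ k + n → (1-d)^m ≤ ∏ i ∈ Finset.Icc 1 m, (1 - p i) := by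
    intro m hm
    calc (1-d)^m = ∏ i ∈ Finset.Icc 1 m, (1-d) := by simp [Nat.card_Icc]
      _ ≤ ∏ i ∈ Finset.Icc 1 m, (1 - p i) := by
          apply Finset.prod_le_prod
          · intro i hi; linarith
          · intro i hi
            have h := hpc i (by
              have := Finset.mem_Icc.mp hi
              exact Finset.mem_Icc.mpr ⟨this.1, by omega⟩)
            linarith [h.2]
  -- rewrite the three q's
  have hq1 : q1 p t k n = (k:ℝ) * T * (∏ i ∈ Finset.Icc 1 (k-1), (1 - p i)) * (p (k+n) - p k) := by
    unfold q1
    rw [hts (k-1) (by omega), ht k (Finset.mem_Icc.mpr ⟨hk, by omega⟩),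
        ht (k+n) (Finset.mem_Icc.mpr ⟨by omega, hkn⟩), Nat.cast_sub hk]
    push_cast
    ring
  have hq2 : q2 p t k n = ∑ l ∈ Finset.Icc (k+1) (k+n-1),
      (∏ i ∈ Finset.Icc 1 (l-1), (1 - p i)) * p l * ((l:ℝ) * T * (p k - p (k+n)) / (1 - p k)) := by
    unfold q2
    refine Finset.sum_congr rfl (fun l hl => ?_)
    have hl' := Finset.mem_Icc.mp hl
    rw [hts l (by omega), ht k (Finset.mem_Icc.mpr ⟨hk, by omega⟩),
        ht (k+n) (Finset.mem_Icc.mpr ⟨by omega, hkn⟩)]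
    ring
  have hq3 : q3 p t k n = ((k:ℝ)+(n:ℝ)) * T * (∏ i ∈ Finset.Icc 1 (k+n-1), (1 - p i)) *
      (p k - p (k+n)) / (1 - p k) := by
    unfold q3
    rw [hts (k+n) hkn]
    push_cast
    ring
  -- EXC = F * E
  have hEXC : q1 p t k n + q2 p t k n + q3 p t k n
      = T * ((p k - p (k+n)) / (1 - p k)) *
        (-((k:ℝ) * (∏ i ∈ Finset.Icc 1 (k-1), (1 - p i)) * (1 - p k))
          + (∑ l ∈ Finset.Icc (k+1) (k+n-1),
              (l:ℝ) * (∏ i ∈ Finset.Icc 1 (l-1), (1 - p i)) * p l)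
          + ((k:ℝ)+(n:ℝ)) * (∏ i ∈ Finset.Icc 1 (k+n-1), (1 - p i))) := by
    rw [hq1, hq2, hq3]
    have h2 : (∑ l ∈ Finset.Icc (k+1) (k+n-1),
        (∏ i ∈ Finset.Icc 1 (l-1), (1 - p i)) * p l * ((l:ℝ) * T * (p k - p (k+n)) / (1 - p k)))
        = T * ((p k - p (k+n)) / (1 - p k)) * (∑ l ∈ Finset.Icc (k+1) (k+n-1),
            (l:ℝ) * (∏ i ∈ Finset.Icc 1 (l-1), (1 - p i)) * p l) := by
      rw [Finset.mul_sum]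
      exact Finset.sum_congr rfl (fun l _ => by ring)
    rw [h2]
    field_simp
    ring
  -- key bound on E
  have hsum : (∑ l ∈ Finset.Icc (k+1) (k+n-1),
      (l:ℝ) * (∏ i ∈ Finset.Icc 1 (l-1), (1 - p i)) * p l)
      ≤ d * ∑ l ∈ Finset.Icc (k+1) (k+n-1), (l:ℝ) * (1-c)^(l-1) := by
    rw [Finset.mul_sum]
    apply Finset.sum_le_sum
    intro l hl
    have hl' := Finset.mem_Icc.mp hl
    have hpl := hpc l (Finset.mem_Icc.mpr ⟨by omega, by omega⟩)
    have hQl := hQle (l-1) (by omega)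
    have h1 : (l:ℝ) * (∏ i ∈ Finset.Icc 1 (l-1), (1 - p i)) * p l
        ≤ (l:ℝ) * (1-c)^(l-1) * d := by
      apply mul_le_mul _ hpl.2 (le_trans hc0.le hpl.1)
      · positivity
      · exact mul_le_mul_of_nonneg_left hQl (by positivity)
    linarith [h1]
  have hterm1 : (k:ℝ) * (1-d)^(k-1) * (1 - p k)
      ≤ (k:ℝ) * (∏ i ∈ Finset.Icc 1 (k-1), (1 - p i)) * (1 - p k) := by
    have := hQge (k-1) (by omega)
    have hk0 : (0:ℝ) ≤ (k:ℝ) := Nat.cast_nonneg k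
    exact mul_le_mul_of_nonneg_right (mul_le_mul_of_nonneg_left this hk0) h1pk.le
  have hterm3 : ((k:ℝ)+(n:ℝ)) * (∏ i ∈ Finset.Icc 1 (k+n-1), (1 - p i))
      ≤ ((k:ℝ)+(n:ℝ)) * (1-c)^(k+n-1) := by
    apply mul_le_mul_of_nonneg_left (hQle (k+n-1) (by omega))
    positivity
  have hgeom := geom_id c d (ne_of_gt hc0) k n hn
  -- R target equality
  have e2 : (1-c)^(k+n-1) = (1-c)^k * (1-c)^(n-1) := by
    rw [← pow_add]; congr 1; omega
  have e1 : (1-c)^k = (1-c)^(k-1) * (1-c) := by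
    rw [← pow_succ]; congr 1; omega
  have hR : d * (1-c)^k * (1 + (k:ℝ)*c)/c^2 - (k:ℝ) * (1 - p k) * (1-d)^(k-1)
        - (1-c)^(k+n-1) * (d/c^2 - d/c + ((n:ℝ)+(k:ℝ))*(d/c - 1))
      = d * ((1 - c) ^ k / c ^ 2) *
        ((1 + (k : ℝ) * c *
            (1 - ((1 - p k) / (1 - c)) * (c / d) * ((1 - d) / (1 - c)) ^ (k - 1))) -
          (1 - c + c * ((n : ℝ) + (k : ℝ)) * (1 - c / d)) * (1 - c) ^ (n - 1)) := by
    rw [e2, e1, div_pow]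
    field_simp
    ring
  rw [hEXC]
  rw [show T * d * ((p k - p (k + n)) / (1 - p k)) * ((1 - c) ^ k / c ^ 2) *
        ((1 + (k : ℝ) * c *
            (1 - ((1 - p k) / (1 - c)) * (c / d) * ((1 - d) / (1 - c)) ^ (k - 1))) -
          (1 - c + c * ((n : ℝ) + (k : ℝ)) * (1 - c / d)) * (1 - c) ^ (n - 1))
      = T * ((p k - p (k + n)) / (1 - p k)) * (d * ((1 - c) ^ k / c ^ 2) *
        ((1 + (k : ℝ) * c *
            (1 - ((1 - p k) / (1 - c)) * (c / d) * ((1 - d) / (1 - c)) ^ (k - 1))) -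
          (1 - c + c * ((n : ℝ) + (k : ℝ)) * (1 - c / d)) * (1 - c) ^ (n - 1))) from by ring]
  apply mul_le_mul_of_nonneg_left _ (mul_nonneg hT.le (div_nonneg (by linarith) h1pk.le))
  rw [← hR]
  linarith [hsum, hterm1, hterm3, hgeom]
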